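/- Let A₁, A₂, B₁, B₂, Y₁, Y₂ ∈ ℚ[x,x⁻¹][[t]] with ord_t B₁ > 0, ord_t B₂ > 0, ord_t Y₁ > 0 and ord_t Y₂ > 0. Then there exists at most one pair (U₁, U₂) of formal power series in ℚ[[x,t]]² satisfying the system U₁(t,x) = A₁(t,x) + B₁(t,x)·U₂(t, Y₁(t,x)) and U₂(t,x) = A₂(t,x) + B₂(t,x)·U₁(t, Y₂(t,x)). -/

import Mathlib

noncomputable section

/-- The composition `W(t, Y(t,x))`, obtained by substituting the series
`Y ∈ ℚ[x,x⁻¹][[t]]` for the variable `x` in the formal power series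
`W ∈ ℚ[[x,t]]`.  Here variable `0` of `W` is `x` and variable `1` is `t`, and
`ℚ[x,x⁻¹][[t]]` is modelled as `PowerSeries (LaurentPolynomial ℚ)`.  Whenever
`Y` has positive `t`-adic valuation, only finitely many terms of `W` contribute
to each power of `t`, and the formula below (in which the inner sums are then
actually finite sums over all relevant indices) computes the genuine
composition `∑_{i,n} (coeff of x^i t^n in W) · Y(t,x)^i · t^n`. -/
def substX (W : MvPowerSeries (Fin 2) ℚ) (Y : PowerSeries (LaurentPolynomial ℚ)) :
    PowerSeries (LaurentPolynomial ℚ) :=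
  PowerSeries.mk fun m =>
    ∑ n ∈ Finset.range (m + 1), ∑ i ∈ Finset.range (m + 1),
      MvPowerSeries.coeff (Finsupp.single 0 i + Finsupp.single 1 n) W •
        PowerSeries.coeff (m - n) (Y ^ i)

/-- The statement that the power series `U, W ∈ ℚ[[x,t]]` satisfy the equation
`U(t,x) = A(t,x) + B(t,x) · W(t, Y(t,x))`, expressed by comparing, for every
`m ∈ ℕ` and `k ∈ ℤ`, the coefficients of `x^k t^m` of the two sides (the
coefficient of `x^k t^m` of `U` being `0` for `k < 0`). -/
def IsCompEq (A B Y : PowerSeries (LaurentPolynomial ℚ))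
    (U W : MvPowerSeries (Fin 2) ℚ) : Prop :=
  ∀ (m : ℕ) (k : ℤ),
    (if 0 ≤ k then
        MvPowerSeries.coeff (Finsupp.single 0 k.toNat + Finsupp.single 1 m) U
      else 0)
      = AddMonoidAlgebra.coeff (PowerSeries.coeff m (A + B * substX W Y)) k

lemma substX_sub (U V : MvPowerSeries (Fin 2) ℚ) (Y : PowerSeries (LaurentPolynomial ℚ)) :
    substX (U - V) Y = substX U Y - substX V Y := by
  ext m
  simp [substX, sub_smul, Finset.sum_sub_distrib]

lemma coeff_mul_substX_eq_zero (B Y : PowerSeries (LaurentPolynomial ℚ))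
    (hB : PowerSeries.constantCoeff B = 0)
    (D : MvPowerSeries (Fin 2) ℚ) (m : ℕ)
    (hD : ∀ n < m, ∀ i : ℕ,
      MvPowerSeries.coeff (Finsupp.single 0 i + Finsupp.single 1 n) D = 0) :
    PowerSeries.coeff m (B * substX D Y) = 0 := by
  rw [PowerSeries.coeff_mul]
  apply Finset.sum_eq_zero
  intro p hp
  rw [Finset.HasAntidiagonal.mem_antidiagonal] at hp
  by_cases h : p.2 = m
  · have hp1 : p.1 = 0 := by omega
    rw [hp1, PowerSeries.coeff_zero_eq_constantCoeff, hB, zero_mul]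
  · have h2 : p.2 < m := by omega
    have : PowerSeries.coeff p.2 (substX D Y) = 0 := by
      simp only [substX, PowerSeries.coeff_mk]
      apply Finset.sum_eq_zero; intro n hn
      apply Finset.sum_eq_zero; intro i _
      rw [Finset.mem_range] at hn
      rw [hD n (by omega) i, zero_smul]
    rw [this, mul_zero]

lemma diff_eq (A B Y : PowerSeries (LaurentPolynomial ℚ))
    (U W V X : MvPowerSeries (Fin 2) ℚ)
    (hU : IsCompEq A B Y U W) (hV : IsCompEq A B Y V X) (m i : ℕ) :
    MvPowerSeries.coeff (Finsupp.single 0 i + Finsupp.single 1 m) (U - V)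
      = AddMonoidAlgebra.coeff (PowerSeries.coeff m (B * substX (W - X) Y)) (i : ℤ) := by
  have h1 := hU m (i : ℤ)
  have h2 := hV m (i : ℤ)
  simp only [Int.toNat_natCast, if_pos (Int.natCast_nonneg i)] at h1 h2
  rw [map_sub, h1, h2, substX_sub, mul_sub, ← Finsupp.sub_apply, ← AddMonoidAlgebra.coeff_sub]
  congr 1
  simp [map_add, map_sub]

/-- Lemma 2: if `A₁, A₂, B₁, B₂, Y₁, Y₂ ∈ ℚ[x,x⁻¹][[t]]` with `ord_t B₁ > 0`,
`ord_t B₂ > 0`, `ord_t Y₁ > 0` and `ord_t Y₂ > 0`, then there is at most one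
pair `(U₁, U₂)` of power series in `ℚ[[x,t]]²` with
`U₁(t,x) = A₁(t,x) + B₁(t,x)·U₂(t,Y₁(t,x))` and
`U₂(t,x) = A₂(t,x) + B₂(t,x)·U₁(t,Y₂(t,x))`. -/
theorem at_most_one_solution_pair (A₁ A₂ B₁ B₂ Y₁ Y₂ : PowerSeries (LaurentPolynomial ℚ))
    (hB₁ : PowerSeries.constantCoeff B₁ = 0)
    (hB₂ : PowerSeries.constantCoeff B₂ = 0)
    (hY₁ : PowerSeries.constantCoeff Y₁ = 0)
    (hY₂ : PowerSeries.constantCoeff Y₂ = 0)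
    (U₁ U₂ V₁ V₂ : MvPowerSeries (Fin 2) ℚ)
    (hU₁ : IsCompEq A₁ B₁ Y₁ U₁ U₂) (hU₂ : IsCompEq A₂ B₂ Y₂ U₂ U₁)
    (hV₁ : IsCompEq A₁ B₁ Y₁ V₁ V₂) (hV₂ : IsCompEq A₂ B₂ Y₂ V₂ V₁) :
    U₁ = V₁ ∧ U₂ = V₂ := by
  have main : ∀ m : ℕ, ∀ i : ℕ,
      MvPowerSeries.coeff (Finsupp.single 0 i + Finsupp.single 1 m) (U₁ - V₁) = 0 ∧
      MvPowerSeries.coeff (Finsupp.single 0 i + Finsupp.single 1 m) (U₂ - V₂) = 0 := by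
    intro m
    induction m using Nat.strong_induction_on with
    | _ m ih =>
      intro i
      constructor
      · rw [diff_eq A₁ B₁ Y₁ U₁ U₂ V₁ V₂ hU₁ hV₁ m i,
          coeff_mul_substX_eq_zero B₁ Y₁ hB₁ _ m (fun n hn j => (ih n hn j).2)]
        simp
      · rw [diff_eq A₂ B₂ Y₂ U₂ U₁ V₂ V₁ hU₂ hV₂ m i,
          coeff_mul_substX_eq_zero B₂ Y₂ hB₂ _ m (fun n hn j => (ih n hn j).1)]
        simp
  have key : ∀ d : Fin 2 →₀ ℕ, d = Finsupp.single 0 (d 0) + Finsupp.single 1 (d 1) := by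
    intro d
    ext j
    fin_cases j <;> simp [Finsupp.single_apply]
  constructor
  · rw [← sub_eq_zero]
    ext d
    have h := (main (d 1) (d 0)).1
    rw [← key d] at h
    simpa using h
  · rw [← sub_eq_zero]
    ext d
    have h := (main (d 1) (d 0)).2
    rw [← key d] at h
    simpa using h
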